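/- Let K be a compact Hausdorff space, (Vₙ) a sequence of pairwise disjoint open subsets of K, tₙ ∈ Vₙ, δ > 0, 0 < ε < δ/2, and (εₙ) positive reals with Σ εₙ < ε. Suppose (gₙ) is a sequence in C(K) with ‖gₙ‖ ≤ 1, |gₙ(tₙ)| ≥ δ, and |gₙ(t)| < εₙ for all t ∉ Vₙ. Then for all scalars λ₁, …, λ_p: (δ/2)·max|λⱼ| ≤ ‖Σⱼ λⱼ gⱼ‖ ≤ (1 + ε)·max|λⱼ|; in particular (gₙ) is equivalent to the canonical basis of c₀. -/

import Mathlib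

/-- Functions `gₙ ∈ C(K)` essentially supported in pairwise disjoint open sets, with
`|gₙ(tₙ)| ≥ δ` and small outside `Vₙ`, are equivalent to the `c₀` basis. -/
theorem stmt10 {K : Type*} [TopologicalSpace K] [CompactSpace K] [T2Space K]
    (V : ℕ → Set K) (hVopen : ∀ n, IsOpen (V n))
    (hVdisj : Pairwise fun n m => Disjoint (V n) (V m))
    (t : ℕ → K) (ht : ∀ n, t n ∈ V n)
    (δ ε : ℝ) (hδ : 0 < δ) (hε0 : 0 < ε) (hεδ : ε < δ / 2)
    (e : ℕ → ℝ) (he : ∀ n, 0 < e n)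
    (hesum : ∑' n, e n < ε) (hesummable : Summable e)
    (g : ℕ → C(K, ℝ)) (hg1 : ∀ n, ‖g n‖ ≤ 1)
    (hgt : ∀ n, δ ≤ |g n (t n)|)
    (hgout : ∀ n, ∀ s ∉ V n, |g n s| < e n) :
    ∀ (p : ℕ) (l : Fin p → ℝ),
      (δ / 2) * (⨆ j, |l j|) ≤ ‖∑ j, l j • g (j : ℕ)‖ ∧
      ‖∑ j, l j • g (j : ℕ)‖ ≤ (1 + ε) * (⨆ j, |l j|) := by
  intro p l
  have hkey : ∀ S : Finset (Fin p), ∑ j ∈ S, e (j : ℕ) ≤ ε := by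
    intro S
    calc ∑ j ∈ S, e (j : ℕ) = ∑ n ∈ S.image Fin.val, e n := by
          rw [Finset.sum_image]
          intro a _ b _ h; exact Fin.val_injective h
      _ ≤ ∑' n, e n := sum_le_hasSum _ (fun n _ => (he n).le) hesummable.hasSum
      _ ≤ ε := hesum.le
  rcases Nat.eq_zero_or_pos p with hp | hp
  · subst hp
    simp [Real.iSup_of_isEmpty]
  haveI : Nonempty (Fin p) := Fin.pos_iff_nonempty.mp hp
  obtain ⟨j0, hj0⟩ := Finite.exists_max fun j : Fin p => |l j|
  have hM : (⨆ j, |l j|) = |l j0| :=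
    le_antisymm (ciSup_le hj0)
      (le_ciSup (f := fun j => |l j|) (Set.Finite.bddAbove (Set.finite_range _)) j0)
  set M := |l j0| with hMdef
  have hM0 : 0 ≤ M := abs_nonneg _
  have heval : ∀ x : K, (∑ j, l j • g (j : ℕ)) x = ∑ j, l j * g (j : ℕ) x := by
    intro x
    simp [ContinuousMap.sum_apply]
  have hgle : ∀ (n : ℕ) (x : K), |g n x| ≤ 1 := fun n x =>
    le_trans ((g n).norm_coe_le_norm x) (hg1 n)
  rw [hM]
  constructor
  · -- lower bound
    have hx := (∑ j, l j • g (j : ℕ)).norm_coe_le_norm (t j0)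
    rw [heval, Real.norm_eq_abs] at hx
    refine le_trans ?_ hx
    have hsplit : ∑ j, l j * g (j : ℕ) (t j0)
        = l j0 * g (j0 : ℕ) (t j0) + ∑ j ∈ Finset.univ.erase j0, l j * g (j : ℕ) (t j0) :=
      (Finset.add_sum_erase Finset.univ (fun j : Fin p => l j * g (j : ℕ) (t j0))
        (Finset.mem_univ j0)).symm
    have hrest : |∑ j ∈ Finset.univ.erase j0, l j * g (j : ℕ) (t j0)| ≤ M * ε := by
      calc |∑ j ∈ Finset.univ.erase j0, l j * g (j : ℕ) (t j0)|
          ≤ ∑ j ∈ Finset.univ.erase j0, |l j * g (j : ℕ) (t j0)| :=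
            Finset.abs_sum_le_sum_abs _ _
        _ ≤ ∑ j ∈ Finset.univ.erase j0, M * e (j : ℕ) := by
            apply Finset.sum_le_sum
            intro j hj
            rw [abs_mul]
            have hjne : (j : ℕ) ≠ (j0 : ℕ) :=
              fun h => (Finset.mem_erase.mp hj).1 (Fin.val_injective h)
            have htnot : t j0 ∉ V (j : ℕ) := fun hmem =>
              (Set.disjoint_left.mp (hVdisj hjne)) hmem (ht j0)
            exact mul_le_mul (hj0 j) (hgout _ _ htnot).le (abs_nonneg _) hM0
        _ = M * ∑ j ∈ Finset.univ.erase j0, e (j : ℕ) := by rw [Finset.mul_sum]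
        _ ≤ M * ε := by
            exact mul_le_mul_of_nonneg_left (hkey _) hM0
    have hmain : M * δ ≤ |l j0 * g (j0 : ℕ) (t j0)| := by
      rw [abs_mul]
      exact mul_le_mul_of_nonneg_left (hgt j0) hM0
    have habs : |l j0 * g (j0 : ℕ) (t j0)| - |∑ j ∈ Finset.univ.erase j0, l j * g (j : ℕ) (t j0)|
        ≤ |∑ j, l j * g (j : ℕ) (t j0)| := by
      rw [hsplit]
      have h1 := abs_add_le (l j0 * g (j0 : ℕ) (t j0) + ∑ j ∈ Finset.univ.erase j0, l j * g (j : ℕ) (t j0))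
        (-(∑ j ∈ Finset.univ.erase j0, l j * g (j : ℕ) (t j0)))
      rw [abs_neg] at h1
      simp only [add_neg_cancel_right] at h1
      linarith
    nlinarith
  · -- upper bound
    apply ContinuousMap.norm_le _ (by positivity) |>.mpr
    intro x
    rw [heval, Real.norm_eq_abs]
    by_cases hx : ∃ i : Fin p, x ∈ V (i : ℕ)
    · obtain ⟨i, hi⟩ := hx
      have hnot : ∀ j : Fin p, j ≠ i → x ∉ V (j : ℕ) := by
        intro j hj hxj
        have hjne : (j : ℕ) ≠ (i : ℕ) := fun h => hj (Fin.val_injective h)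
        exact (Set.disjoint_left.mp (hVdisj hjne)) hxj hi
      calc |∑ j, l j * g (j : ℕ) x| ≤ ∑ j, |l j * g (j : ℕ) x| :=
            Finset.abs_sum_le_sum_abs _ _
        _ = |l i * g (i : ℕ) x| + ∑ j ∈ Finset.univ.erase i, |l j * g (j : ℕ) x| :=
            (Finset.add_sum_erase _ _ (Finset.mem_univ i)).symm
        _ ≤ M * 1 + ∑ j ∈ Finset.univ.erase i, M * e (j : ℕ) := by
            gcongr with j hj
            · rw [abs_mul]
              exact mul_le_mul (hj0 i) (hgle _ _) (abs_nonneg _) hM0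
            · rw [abs_mul]
              exact mul_le_mul (hj0 j) (hgout _ _ (hnot j (Finset.mem_erase.mp hj).1)).le
                (abs_nonneg _) hM0
        _ ≤ M * 1 + M * ε := by
            rw [← Finset.mul_sum]
            exact add_le_add_right (mul_le_mul_of_nonneg_left (hkey _) hM0) _
        _ = (1 + ε) * M := by ring
    · push_neg at hx
      calc |∑ j, l j * g (j : ℕ) x| ≤ ∑ j, |l j * g (j : ℕ) x| :=
            Finset.abs_sum_le_sum_abs _ _
        _ ≤ ∑ j : Fin p, M * e (j : ℕ) := by
            apply Finset.sum_le_sum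
            intro j _
            rw [abs_mul]
            exact mul_le_mul (hj0 j) (hgout _ _ (hx j)).le (abs_nonneg _) hM0
        _ = M * ∑ j : Fin p, e (j : ℕ) := by rw [Finset.mul_sum]
        _ ≤ M * ε := mul_le_mul_of_nonneg_left (hkey _) hM0
        _ ≤ (1 + ε) * M := by nlinarith
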